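/- Let Q̲ be a lower transition rate operator on ℝ^𝒳 and, for each i ∈ {1,…,n}, let Δ_i ≥ 0 be such that Δ_i‖Q̲‖ ≤ 1, where ‖Q̲‖ := sup{‖Q̲f‖ : ‖f‖ = 1}. Let Δ := Σ_{i=1}^n Δ_i. Then ‖(I+Δ_1Q̲)∘(I+Δ_2Q̲)∘⋯∘(I+Δ_nQ̲) − (I+ΔQ̲)‖ ≤ Δ²‖Q̲‖², where for maps A, B : ℝ^𝒳 → ℝ^𝒳 we write ‖A − B‖ := sup{‖Af − Bf‖ : f ∈ ℝ^𝒳, ‖f‖ = 1}. -/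

import Mathlib

open scoped BigOperators

/-- A lower transition rate operator on `ℝ^𝒳`: maps constants to zero (LR1), is
nonnegative on off-diagonal indicators (LR2), super-additive (LR3), and
non-negatively homogeneous (LR4). -/
def IsLowerTransitionRateOperator {X : Type*} [Fintype X] [DecidableEq X]
    (Q : (X → ℝ) → (X → ℝ)) : Prop :=
  (∀ c : ℝ, Q (fun _ => c) = 0) ∧
  (∀ x y : X, y ≠ x → 0 ≤ Q (Pi.single y 1) x) ∧
  (∀ f g : X → ℝ, ∀ x : X, Q f x + Q g x ≤ Q (f + g) x) ∧
  (∀ c : ℝ, 0 ≤ c → ∀ f : X → ℝ, Q (c • f) = c • Q f)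

/-- The distance `‖A − B‖ = sup{‖Af − Bf‖ : ‖f‖ = 1}` between two maps of `ℝ^𝒳`,
where `‖·‖` is the supremum norm. -/
noncomputable def opDist {X : Type*} [Fintype X]
    (A B : (X → ℝ) → (X → ℝ)) : ℝ :=
  ⨆ f : {f : X → ℝ // ‖f‖ = 1}, ‖A f.1 - B f.1‖

/-- The operator norm `‖A‖ = sup{‖Af‖ : ‖f‖ = 1}` of a map of `ℝ^𝒳`. -/
noncomputable def opNorm {X : Type*} [Fintype X] (A : (X → ℝ) → (X → ℝ)) : ℝ :=
  ⨆ f : {f : X → ℝ // ‖f‖ = 1}, ‖A f.1‖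

/-- The composition `T 0 ∘ T 1 ∘ ⋯ ∘ T (n-1)` of a finite family of operators,
in the given order. -/
def compFamily {X : Type*} {n : ℕ} (T : Fin n → ((X → ℝ) → (X → ℝ))) :
    (X → ℝ) → (X → ℝ) :=
  (List.ofFn T).foldr (· ∘ ·) id

section Aux
variable {X : Type*} [Fintype X] [DecidableEq X]
variable {Q : (X → ℝ) → (X → ℝ)}

lemma ltro_zero (hQ : IsLowerTransitionRateOperator Q) : Q 0 = 0 := by
  have := hQ.2.2.2 0 le_rfl 0
  simpa using this

lemma ltro_sum_le (hQ : IsLowerTransitionRateOperator Q) {ι : Type*} (s : Finset ι)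
    (f : ι → X → ℝ) (x : X) :
    ∑ i ∈ s, Q (f i) x ≤ Q (∑ i ∈ s, f i) x := by
  classical
  induction s using Finset.cons_induction with
  | empty => simp [ltro_zero hQ]
  | cons a s ha ih =>
      rw [Finset.sum_cons, Finset.sum_cons]
      calc Q (f a) x + ∑ i ∈ s, Q (f i) x ≤ Q (f a) x + Q (∑ i ∈ s, f i) x := by linarith
        _ ≤ Q (f a + ∑ i ∈ s, f i) x := hQ.2.2.1 _ _ x

lemma ltro_single_le (hQ : IsLowerTransitionRateOperator Q) (g : X → ℝ)
    (hg : ∀ y, 0 ≤ g y) (x : X) :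
    g x * Q (Pi.single x 1) x ≤ Q g x := by
  have hdecomp : ∑ y : X, (g y) • (Pi.single y (1 : ℝ) : X → ℝ) = g := by
    ext z
    simp [Finset.sum_apply, Pi.single_apply, mul_ite, mul_one, mul_zero]
  have h1 : ∑ y : X, Q ((g y) • (Pi.single y (1 : ℝ) : X → ℝ)) x ≤ Q g x := by
    have := ltro_sum_le hQ Finset.univ (fun y => (g y) • (Pi.single y (1 : ℝ) : X → ℝ)) x
    rwa [hdecomp] at this
  have h2 : ∀ y : X, Q ((g y) • (Pi.single y (1 : ℝ) : X → ℝ)) x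
      = g y * Q (Pi.single y 1) x := by
    intro y
    rw [hQ.2.2.2 (g y) (hg y) (Pi.single y 1)]
    simp
  rw [Finset.sum_congr rfl (fun y _ => h2 y)] at h1
  have h3 : g x * Q (Pi.single x 1) x ≤ ∑ y : X, g y * Q (Pi.single y 1) x := by
    rw [← Finset.add_sum_erase Finset.univ _ (Finset.mem_univ x)]
    have : 0 ≤ ∑ y ∈ Finset.univ.erase x, g y * Q (Pi.single y 1) x :=
      Finset.sum_nonneg fun y hy =>
        mul_nonneg (hg y) (hQ.2.1 x y (Finset.ne_of_mem_erase hy))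
    linarith
  linarith

lemma ltro_translate (hQ : IsLowerTransitionRateOperator Q) (g : X → ℝ) (c : ℝ) (x : X) :
    Q (g + fun _ => c) x = Q g x := by
  have h1 : Q g x + Q (fun _ => c) x ≤ Q (g + fun _ => c) x := hQ.2.2.1 _ _ x
  have h2 : Q (g + fun _ => c) x + Q (fun _ => -c) x ≤ Q ((g + fun _ => c) + fun _ => -c) x :=
    hQ.2.2.1 _ _ x
  have e : ((g + fun _ => c) + fun _ => -c) = g := by ext z; simp
  rw [hQ.1 c] at h1
  rw [hQ.1 (-c), e] at h2
  simp only [Pi.zero_apply, add_zero] at h1 h2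
  linarith

end Aux

section Aux2
variable {X : Type*} [Fintype X] [DecidableEq X]
variable {Q : (X → ℝ) → (X → ℝ)}

lemma ltro_lower (hQ : IsLowerTransitionRateOperator Q) (g : X → ℝ) (x : X) :
    -(2 * ‖g‖ * |Q (Pi.single x 1) x|) ≤ Q g x := by
  set h : X → ℝ := g + fun _ => ‖g‖ with hh
  have habs : ∀ y, |g y| ≤ ‖g‖ := by
    intro y
    have := norm_le_pi_norm g y
    simpa [Real.norm_eq_abs] using this
  have hpos : ∀ y, 0 ≤ h y := by
    intro y
    have := (abs_le.mp (habs y)).1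
    simp only [hh, Pi.add_apply]
    linarith
  have hle : ∀ y, h y ≤ 2 * ‖g‖ := by
    intro y
    have := (abs_le.mp (habs y)).2
    simp only [hh, Pi.add_apply]
    linarith
  have e1 : Q h x = Q g x := ltro_translate hQ g ‖g‖ x
  have e2 : h x * Q (Pi.single x 1) x ≤ Q h x := ltro_single_le hQ h hpos x
  have e3 : Q (Pi.single x 1) x ≥ -|Q (Pi.single x 1) x| := neg_abs_le _
  nlinarith [hpos x, hle x, abs_nonneg (Q (Pi.single x 1) x),
    mul_le_mul_of_nonneg_left e3 (hpos x)]

lemma ltro_upper (hQ : IsLowerTransitionRateOperator Q) (g : X → ℝ) (x : X) :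
    Q g x ≤ 2 * ‖g‖ * |Q (Pi.single x 1) x| := by
  have h := hQ.2.2.1 g (-g) x
  have e : g + (-g) = 0 := by ext z; simp
  rw [e, ltro_zero hQ] at h
  have h2 := ltro_lower hQ (-g) x
  rw [norm_neg] at h2
  simp only [Pi.zero_apply] at h
  linarith

lemma ltro_norm_bound (hQ : IsLowerTransitionRateOperator Q) (g : X → ℝ) :
    ‖Q g‖ ≤ (2 * ∑ x, |Q (Pi.single x 1) x|) * ‖g‖ := by
  have hM : ∀ x : X, |Q (Pi.single x 1) x| ≤ ∑ y, |Q (Pi.single y 1) y| := fun x =>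
    Finset.single_le_sum (f := fun y => |Q (Pi.single y 1) y|)
      (fun _ _ => abs_nonneg _) (Finset.mem_univ x)
  have hM0 : 0 ≤ ∑ y : X, |Q (Pi.single y 1) y| := Finset.sum_nonneg fun _ _ => abs_nonneg _
  rw [pi_norm_le_iff_of_nonneg (by positivity)]
  intro x
  rw [Real.norm_eq_abs, abs_le]
  constructor
  · have := ltro_lower hQ g x
    nlinarith [norm_nonneg g, hM x, abs_nonneg (Q (Pi.single x 1) x)]
  · have := ltro_upper hQ g x
    nlinarith [norm_nonneg g, hM x, abs_nonneg (Q (Pi.single x 1) x)]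

variable [Nonempty X]

lemma unit_sphere_nonempty : Nonempty {f : X → ℝ // ‖f‖ = 1} :=
  ⟨⟨fun _ => 1, by
    have : ‖(fun _ => (1:ℝ) : X → ℝ)‖ = ‖(1:ℝ)‖ := pi_norm_const (1:ℝ)
    simpa using this⟩⟩

lemma opNorm_bdd (hQ : IsLowerTransitionRateOperator Q) :
    BddAbove (Set.range fun f : {f : X → ℝ // ‖f‖ = 1} => ‖Q f.1‖) := by
  refine ⟨2 * ∑ x, |Q (Pi.single x 1) x|, ?_⟩
  rintro r ⟨f, rfl⟩
  have := ltro_norm_bound hQ f.1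
  rw [f.2] at this
  simpa using this

lemma opNorm_nonneg' : 0 ≤ opNorm Q :=
  Real.iSup_nonneg fun _ => norm_nonneg _

lemma ltro_norm_le (hQ : IsLowerTransitionRateOperator Q) (g : X → ℝ) :
    ‖Q g‖ ≤ opNorm Q * ‖g‖ := by
  rcases eq_or_ne g 0 with rfl | hg
  · simp [ltro_zero hQ]
  · have hg' : 0 < ‖g‖ := norm_pos_iff.mpr hg
    set u : X → ℝ := ‖g‖⁻¹ • g with hu
    have hu1 : ‖u‖ = 1 := by
      rw [hu, norm_smul, Real.norm_eq_abs, abs_of_pos (inv_pos.mpr hg')]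
      field_simp
    have he : g = ‖g‖ • u := by
      rw [hu, smul_smul]
      field_simp
      rw [one_smul]
    have hQg : Q g = ‖g‖ • Q u := by
      have := hQ.2.2.2 ‖g‖ (norm_nonneg g) u
      rwa [← he] at this
    rw [hQg, norm_smul, Real.norm_eq_abs, abs_of_pos hg', mul_comm]
    have : ‖Q u‖ ≤ opNorm Q := le_ciSup (opNorm_bdd hQ) ⟨u, hu1⟩
    exact mul_le_mul_of_nonneg_right this hg'.le

lemma ltro_lipschitz (hQ : IsLowerTransitionRateOperator Q) (f g : X → ℝ) :
    ‖Q f - Q g‖ ≤ opNorm Q * ‖f - g‖ := by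
  have hnn : 0 ≤ opNorm Q * ‖f - g‖ := mul_nonneg opNorm_nonneg' (norm_nonneg _)
  rw [pi_norm_le_iff_of_nonneg hnn]
  intro x
  have k1 : |Q (f - g) x| ≤ opNorm Q * ‖f - g‖ := by
    have := norm_le_pi_norm (Q (f - g)) x
    rw [Real.norm_eq_abs] at this
    exact this.trans (ltro_norm_le hQ (f - g))
  have k2 : |Q (g - f) x| ≤ opNorm Q * ‖f - g‖ := by
    have := norm_le_pi_norm (Q (g - f)) x
    rw [Real.norm_eq_abs] at this
    refine this.trans ?_
    have := ltro_norm_le hQ (g - f)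
    rwa [norm_sub_rev g f] at this
  have h1 : Q (f - g) x + Q g x ≤ Q f x := by
    have := hQ.2.2.1 (f - g) g x
    rwa [sub_add_cancel] at this
  have h2 : Q (g - f) x + Q f x ≤ Q g x := by
    have := hQ.2.2.1 (g - f) f x
    rwa [sub_add_cancel] at this
  rw [Real.norm_eq_abs, Pi.sub_apply, abs_le]
  constructor
  · have := (abs_le.mp k1).1; linarith
  · have := (abs_le.mp k2).1; linarith

end Aux2

section Aux3
variable {X : Type*} [Fintype X] [DecidableEq X] [Nonempty X]
variable {Q : (X → ℝ) → (X → ℝ)}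

lemma ltro_q_le (hQ : IsLowerTransitionRateOperator Q) (x : X) :
    |Q (Pi.single x 1) x| ≤ opNorm Q := by
  have h1 : ‖(Pi.single x 1 : X → ℝ)‖ = 1 := by
    apply le_antisymm
    · rw [pi_norm_le_iff_of_nonneg zero_le_one]
      intro y
      rw [Real.norm_eq_abs, Pi.single_apply]
      split <;> simp
    · have := norm_le_pi_norm (Pi.single x 1 : X → ℝ) x
      simpa using this
  have := (norm_le_pi_norm (Q (Pi.single x 1)) x).trans (ltro_norm_le hQ (Pi.single x 1))
  rw [h1, mul_one, Real.norm_eq_abs] at this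
  exact this

lemma ltro_nonexpansive (hQ : IsLowerTransitionRateOperator Q) {δ : ℝ} (hδ : 0 ≤ δ)
    (hδ1 : δ * opNorm Q ≤ 1) (f : X → ℝ) :
    ‖f + δ • Q f‖ ≤ ‖f‖ := by
  rw [pi_norm_le_iff_of_nonneg (norm_nonneg f)]
  intro x
  have habs : ∀ y, |f y| ≤ ‖f‖ := by
    intro y
    have := norm_le_pi_norm f y
    simpa [Real.norm_eq_abs] using this
  have hq := ltro_q_le hQ x
  have hN : 0 ≤ opNorm Q := opNorm_nonneg'
  simp only [Pi.add_apply, Pi.smul_apply, smul_eq_mul, Real.norm_eq_abs, abs_le]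
  constructor
  -- lower bound : -‖f‖ ≤ f x + δ * Q f x
  · set h : X → ℝ := f + fun _ => ‖f‖ with hh
    have hpos : ∀ y, 0 ≤ h y := by
      intro y
      have := (abs_le.mp (habs y)).1
      simp only [hh, Pi.add_apply]; linarith
    have e1 : Q h x = Q f x := ltro_translate hQ f ‖f‖ x
    have e2 : h x * Q (Pi.single x 1) x ≤ Q h x := ltro_single_le hQ h hpos x
    have hx : h x = f x + ‖f‖ := rfl
    -- Q f x ≥ - h x * opNorm Q
    have e3 : -(h x * opNorm Q) ≤ Q f x := by
      rw [← e1]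
      have : -(opNorm Q) ≤ Q (Pi.single x 1) x := by
        have := (abs_le.mp hq).1; linarith
      nlinarith [hpos x]
    nlinarith [hpos x, mul_le_mul_of_nonneg_left e3 hδ]
  -- upper bound : f x + δ * Q f x ≤ ‖f‖
  · set h : X → ℝ := (fun _ => ‖f‖) - f with hh
    have hpos : ∀ y, 0 ≤ h y := by
      intro y
      have := (abs_le.mp (habs y)).2
      simp only [hh, Pi.sub_apply]; linarith
    have hsum : f + h = fun _ => ‖f‖ := by ext z; simp [hh]
    have h1 : Q f x + Q h x ≤ 0 := by
      have := hQ.2.2.1 f h x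
      rw [hsum, hQ.1 ‖f‖] at this
      simpa using this
    have e2 : h x * Q (Pi.single x 1) x ≤ Q h x := ltro_single_le hQ h hpos x
    have hx : h x = ‖f‖ - f x := rfl
    have e3 : Q f x ≤ h x * opNorm Q := by
      have : -(opNorm Q) ≤ Q (Pi.single x 1) x := by
        have := (abs_le.mp hq).1; linarith
      nlinarith [hpos x]
    nlinarith [hpos x, mul_le_mul_of_nonneg_left e3 hδ]

lemma ltro_main (hQ : IsLowerTransitionRateOperator Q) :
    ∀ (n : ℕ) (Δ : Fin n → ℝ), (∀ i, 0 ≤ Δ i) → (∀ i, Δ i * opNorm Q ≤ 1) → ∀ f : X → ℝ,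
    ‖compFamily (fun i => fun g => g + Δ i • Q g) f‖ ≤ ‖f‖ ∧
    ‖compFamily (fun i => fun g => g + Δ i • Q g) f - f‖ ≤ (∑ i, Δ i) * opNorm Q * ‖f‖ ∧
    ‖compFamily (fun i => fun g => g + Δ i • Q g) f - f - (∑ i, Δ i) • Q f‖ ≤
      (∑ i, Δ i) ^ 2 * opNorm Q ^ 2 * ‖f‖ := by
  intro n
  induction n with
  | zero =>
      intro Δ h0 h1 f
      simp [compFamily]
  | succ n ih =>
      intro Δ h0 h1 f
      have hcomp : compFamily (fun i : Fin (n+1) => fun g => g + Δ i • Q g)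
          = (fun g => g + Δ 0 • Q g) ∘
            compFamily (fun i : Fin n => fun g => g + Δ i.succ • Q g) := by
        simp [compFamily, List.ofFn_succ]
      obtain ⟨ha, hb, hc⟩ := ih (fun i => Δ i.succ) (fun i => h0 i.succ) (fun i => h1 i.succ) f
      set g : X → ℝ := compFamily (fun i : Fin n => fun g => g + Δ i.succ • Q g) f with hg
      set D : ℝ := ∑ i : Fin n, Δ i.succ with hD
      have hsum : ∑ i : Fin (n+1), Δ i = Δ 0 + D := by
        rw [Fin.sum_univ_succ]
      have hN : 0 ≤ opNorm Q := opNorm_nonneg'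
      have hD0 : 0 ≤ D := Finset.sum_nonneg fun i _ => h0 i.succ
      have hΔ0 : 0 ≤ Δ 0 := h0 0
      have hf : 0 ≤ ‖f‖ := norm_nonneg f
      rw [hcomp]
      refine ⟨?_, ?_, ?_⟩
      · calc ‖g + Δ 0 • Q g‖ ≤ ‖g‖ := ltro_nonexpansive hQ (h0 0) (h1 0) g
          _ ≤ ‖f‖ := ha
      · rw [hsum]
        have e : (g + Δ 0 • Q g) - f = (g - f) + Δ 0 • Q g := by
          ext z; simp; ring
        calc ‖(fun g => g + Δ 0 • Q g) (compFamily (fun i : Fin n => fun g => g + Δ i.succ • Q g) f) - f‖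
            = ‖(g - f) + Δ 0 • Q g‖ := by rw [← hg, e]
          _ ≤ ‖g - f‖ + ‖Δ 0 • Q g‖ := norm_add_le _ _
          _ = ‖g - f‖ + Δ 0 * ‖Q g‖ := by
              rw [norm_smul, Real.norm_eq_abs, abs_of_nonneg hΔ0]
          _ ≤ D * opNorm Q * ‖f‖ + Δ 0 * (opNorm Q * ‖g‖) := by
              have := ltro_norm_le hQ g
              have h2 : Δ 0 * ‖Q g‖ ≤ Δ 0 * (opNorm Q * ‖g‖) :=
                mul_le_mul_of_nonneg_left this hΔ0
              linarith
          _ ≤ (Δ 0 + D) * opNorm Q * ‖f‖ := by nlinarith [mul_le_mul_of_nonneg_left ha (mul_nonneg hΔ0 hN)]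
      · rw [hsum]
        have e : (g + Δ 0 • Q g) - f - (Δ 0 + D) • Q f
            = ((g - f - D • Q f) + Δ 0 • (Q g - Q f)) := by
          ext z; simp [add_smul]; ring
        calc ‖(fun g => g + Δ 0 • Q g) (compFamily (fun i : Fin n => fun g => g + Δ i.succ • Q g) f) - f - (Δ 0 + D) • Q f‖
            = ‖(g - f - D • Q f) + Δ 0 • (Q g - Q f)‖ := by rw [← hg, e]
          _ ≤ ‖g - f - D • Q f‖ + Δ 0 * ‖Q g - Q f‖ := by
              refine (norm_add_le _ _).trans ?_
              rw [norm_smul, Real.norm_eq_abs, abs_of_nonneg hΔ0]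
          _ ≤ D ^ 2 * opNorm Q ^ 2 * ‖f‖ + Δ 0 * (opNorm Q * ‖g - f‖) := by
              have := ltro_lipschitz hQ g f
              have h2 : Δ 0 * ‖Q g - Q f‖ ≤ Δ 0 * (opNorm Q * ‖g - f‖) :=
                mul_le_mul_of_nonneg_left this hΔ0
              linarith
          _ ≤ D ^ 2 * opNorm Q ^ 2 * ‖f‖ + Δ 0 * (opNorm Q * (D * opNorm Q * ‖f‖)) := by
              have h2 : opNorm Q * ‖g - f‖ ≤ opNorm Q * (D * opNorm Q * ‖f‖) :=
                mul_le_mul_of_nonneg_left hb hN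
              nlinarith
          _ ≤ (Δ 0 + D) ^ 2 * opNorm Q ^ 2 * ‖f‖ := by
              nlinarith [mul_nonneg (mul_nonneg (mul_nonneg hΔ0 hΔ0) (mul_nonneg hN hN)) hf,
                mul_nonneg (mul_nonneg (mul_nonneg hΔ0 hD0) (mul_nonneg hN hN)) hf]

end Aux3

/-- `‖(I+Δ_1Q̲)∘⋯∘(I+Δ_nQ̲) − (I+ΔQ̲)‖ ≤ Δ²‖Q̲‖²` with `Δ = Σ_i Δ_i`, whenever each
`Δ_i ≥ 0` satisfies `Δ_i‖Q̲‖ ≤ 1`. -/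
theorem stmt16 {X : Type*} [Fintype X] [Nonempty X] [DecidableEq X]
    (Ql : (X → ℝ) → (X → ℝ)) (hQl : IsLowerTransitionRateOperator Ql)
    {n : ℕ} (Δ : Fin n → ℝ) (hΔ0 : ∀ i, 0 ≤ Δ i)
    (hΔQl : ∀ i, Δ i * opNorm Ql ≤ 1) :
    opDist (compFamily (fun i => fun g => g + Δ i • Ql g))
        (fun g => g + (∑ i, Δ i) • Ql g) ≤
      (∑ i, Δ i) ^ 2 * opNorm Ql ^ 2 := by
  haveI : Nonempty {f : X → ℝ // ‖f‖ = 1} := unit_sphere_nonempty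
  rw [opDist]
  refine ciSup_le ?_
  rintro ⟨f, hf⟩
  have h := (ltro_main hQl n Δ hΔ0 hΔQl f).2.2
  rw [hf, mul_one] at h
  have e : compFamily (fun i => fun g => g + Δ i • Ql g) f - (f + (∑ i, Δ i) • Ql f)
      = compFamily (fun i => fun g => g + Δ i • Ql g) f - f - (∑ i, Δ i) • Ql f := by
    ext z; simp; ring
  simpa [e] using h
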